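/- Let λ, μ, ν, λ', μ', ν' be partitions with c(λ';μ',ν') ≠ 0. Then for every n ≥ 0, c(nλ+λ'; nμ+μ', nν+ν') ≥ c(nλ; nμ, nν). -/

import Mathlib

/-- A partition: a weakly decreasing sequence of naturals with finitely many
nonzero terms.  `parts i` is the `(i+1)`-st part `λ_{i+1}`. -/
structure LRPartition where
  parts : ℕ → ℕ
  antitone' : ∀ ⦃i j : ℕ⦄, i ≤ j → parts j ≤ parts i
  eventually_zero : ∃ N, ∀ i, N ≤ i → parts i = 0

namespace LRPartition

/-- Componentwise sum `λ + μ`. -/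
def add (a b : LRPartition) : LRPartition where
  parts i := a.parts i + b.parts i
  antitone' := fun _ _ h => Nat.add_le_add (a.antitone' h) (b.antitone' h)
  eventually_zero := by
    obtain ⟨M, hM⟩ := a.eventually_zero
    obtain ⟨N, hN⟩ := b.eventually_zero
    refine ⟨max M N, fun i hi => ?_⟩
    show a.parts i + b.parts i = 0
    rw [hM i (le_trans (le_max_left M N) hi), hN i (le_trans (le_max_right M N) hi)]

instance : Add LRPartition := ⟨add⟩

@[simp] theorem add_parts (a b : LRPartition) (i : ℕ) :
    (a + b).parts i = a.parts i + b.parts i := rfl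

/-- The stretched partition `n • λ = (nλ₁, nλ₂, …)`. -/
def stretch (n : ℕ) (a : LRPartition) : LRPartition where
  parts i := n * a.parts i
  antitone' := fun _ _ h => Nat.mul_le_mul_left n (a.antitone' h)
  eventually_zero := by
    obtain ⟨N, hN⟩ := a.eventually_zero
    exact ⟨N, fun i hi => by show n * a.parts i = 0; rw [hN i hi, Nat.mul_zero]⟩

instance : SMul ℕ LRPartition := ⟨stretch⟩

@[simp] theorem smul_parts (n : ℕ) (a : LRPartition) (i : ℕ) :
    (n • a).parts i = n * a.parts i := rfl

/-- Containment of Young diagrams: `μ ⊆ λ` iff `μᵢ ≤ λᵢ` for all `i`. -/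
def Sub (m l : LRPartition) : Prop := ∀ i, m.parts i ≤ l.parts i

/-- The number of (nonzero) parts, `l(λ)`. -/
noncomputable def length (a : LRPartition) : ℕ := {i | a.parts i ≠ 0}.ncard

end LRPartition

/-- `u = λ ∪ λ'`: the multiset of (positive) parts of `u` is the multiset union of
those of `λ` and `λ'`, expressed via multiplicities of every positive value `t`. -/
def IsUnion (a b u : LRPartition) : Prop :=
  ∀ t : ℕ, 0 < t →
    {i | u.parts i = t}.ncard = {i | a.parts i = t}.ncard + {i | b.parts i = t}.ncard

/-- The cells of the skew diagram `λ/μ`: boxes `(i, j)` (row `i`, column `j`,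
both 0-indexed) with `μ_{i+1} ≤ j < λ_{i+1}`. -/
def skewCells (l m : LRPartition) : Set (ℕ × ℕ) :=
  {p | m.parts p.1 ≤ p.2 ∧ p.2 < l.parts p.1}

/-- `T` is a Littlewood–Richardson tableau of shape `λ/μ` and content `ν`.
`T (i, j)` records the entry in box `(i, j)`; boxes carry positive integers and `T`
vanishes off the diagram.  Rows weakly increase, columns strictly increase, the entry
`k + 1` occurs `ν_{k+1} = ν.parts k` times, and the lattice-word condition on the
reverse reading word is expressed via its initial segments: for every `r c`, the
cells read up to position `(r, c)` are exactly those in rows `< r` together with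
those in row `r` in columns `≥ c`. -/
structure IsLRTableau (l m n : LRPartition) (T : ℕ × ℕ → ℕ) : Prop where
  sub : LRPartition.Sub m l
  pos : ∀ p ∈ skewCells l m, 0 < T p
  zero : ∀ p, p ∉ skewCells l m → T p = 0
  row_weak : ∀ i j j', (i, j) ∈ skewCells l m → (i, j') ∈ skewCells l m →
    j ≤ j' → T (i, j) ≤ T (i, j')
  col_strict : ∀ i i' j, (i, j) ∈ skewCells l m → (i', j) ∈ skewCells l m →
    i < i' → T (i, j) < T (i', j)
  content : ∀ k : ℕ, {p ∈ skewCells l m | T p = k + 1}.ncard = n.parts k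
  lattice : ∀ r c k : ℕ, 0 < k →
    {p ∈ skewCells l m | (p.1 < r ∨ (p.1 = r ∧ c ≤ p.2)) ∧ T p = k + 1}.ncard ≤
      {p ∈ skewCells l m | (p.1 < r ∨ (p.1 = r ∧ c ≤ p.2)) ∧ T p = k}.ncard

/-- The Littlewood–Richardson coefficient `c(λ; μ, ν)`: the number of LR tableaux of
shape `λ/μ` and content `ν` (zero when `μ ⊄ λ`). -/
noncomputable def LRcoeff (l m n : LRPartition) : ℕ :=
  Set.ncard {T : ℕ × ℕ → ℕ | IsLRTableau l m n T}

/-- `λ/μ` is a partition shape: `μᵢ = 0` in every nonempty row. -/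
def IsPartitionShape (l m : LRPartition) : Prop :=
  ∀ i, m.parts i < l.parts i → m.parts i = 0

/-- `λ/μ` is a rotated partition shape: `λᵢ` takes the same value in all nonempty rows. -/
def IsRotatedShape (l m : LRPartition) : Prop :=
  ∀ i j, m.parts i < l.parts i → m.parts j < l.parts j → l.parts i = l.parts j

/-- A proper skew diagram: neither a partition shape nor a rotated partition. -/
def IsProperSkew (l m : LRPartition) : Prop :=
  ¬ IsPartitionShape l m ∧ ¬ IsRotatedShape l m

/-- `λ/μ` is a basic skew diagram: `μᵢ < λᵢ` and `μᵢ ≤ λ_{i+1}` for each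
`1 ≤ i ≤ l(λ)` (no empty rows or columns). -/
def IsBasicSkew (l m : LRPartition) : Prop :=
  ∀ i, 0 < l.parts i → m.parts i < l.parts i ∧ m.parts i ≤ l.parts (i + 1)

/-- `Q^{λ,μ}_{λ',μ'}(n) = Σ_ν c(nλ+λ'; nμ+μ', ν)`, the sum over all partitions `ν`. -/
noncomputable def Qfun (l m l' m' : LRPartition) (n : ℕ) : ℕ :=
  ∑ᶠ ν : LRPartition, LRcoeff (n • l + l') (n • m + m') ν

/-- `P^{λ,μ,ν}_{λ',μ',ν'}(n) = c(nλ+λ'; nμ+μ', nν+ν')`. -/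
noncomputable def Pfun (l m nu l' m' nu' : LRPartition) (n : ℕ) : ℕ :=
  LRcoeff (n • l + l') (n • m + m') (n • nu + nu')

/-- The partition `(1^a)` consisting of `a` parts equal to `1`. -/
def onesPartition (a : ℕ) : LRPartition where
  parts i := if i < a then 1 else 0
  antitone' := by intro i j h; (try dsimp only); split_ifs <;> omega
  eventually_zero := ⟨a, fun i hi => by (try dsimp only); split_ifs <;> omega⟩

/-- The partition `(a)` with a single part `a` (the empty partition if `a = 0`). -/
def singlePartition (a : ℕ) : LRPartition where
  parts i := if i = 0 then a else 0
  antitone' := by intro i j h; (try dsimp only); split_ifs <;> omega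
  eventually_zero := ⟨1, fun i hi => by (try dsimp only); split_ifs <;> omega⟩
namespace LRAux

open Finset

/-- generic fiberwise counting -/
lemma ncard_fiber_sum {α : Type*} (S : Set α) (hS : S.Finite) (f : α → ℕ) (R : ℕ)
    (h : ∀ a ∈ S, f a < R) :
    S.ncard = ∑ k ∈ Finset.range R, {a ∈ S | f a = k}.ncard := by
  classical
  have hcard := Finset.card_eq_sum_card_fiberwise
    (f := f) (s := hS.toFinset) (t := Finset.range R)
    (by intro x hx; simp only [Finset.mem_coe, Set.Finite.mem_toFinset] at hx
        exact Finset.mem_range.mpr (h x hx))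
  rw [← Set.ncard_coe_finset hS.toFinset, Set.Finite.coe_toFinset] at hcard
  rw [hcard]
  refine Finset.sum_congr rfl fun k _ => ?_
  rw [← Set.ncard_coe_finset]
  congr 1
  ext a
  simp [Set.mem_setOf_eq, Set.Finite.mem_toFinset]

lemma ncard_fiber_fst (S : Set (ℕ × ℕ)) (i : ℕ) :
    {p ∈ S | p.1 = i}.ncard = {j | (i, j) ∈ S}.ncard := by
  rw [← Set.ncard_image_of_injective {j | (i, j) ∈ S}
    (f := fun j => (i, j)) (fun a b hab => by simpa using hab)]
  congr 1
  ext ⟨a, b⟩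
  simp only [Set.mem_setOf_eq, Set.mem_image]
  constructor
  · rintro ⟨hS, rfl⟩; exact ⟨b, hS, rfl⟩
  · rintro ⟨j, hj, h⟩; cases h; exact ⟨hj, rfl⟩

lemma setIco (a b : ℕ) : {j : ℕ | a ≤ j ∧ j < b} = Set.Ico a b := rfl

lemma ncard_Ico (a b : ℕ) : (Set.Ico a b).ncard = b - a := by
  rw [← Finset.coe_Ico, Set.ncard_coe_finset, Nat.card_Ico]

lemma Ico_inj {m a b : ℕ} (ha : m ≤ a) (hb : m ≤ b) (h : Set.Ico m a = Set.Ico m b) : a = b := by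
  by_contra hne
  rcases Nat.lt_or_ge a b with hlt | hge
  · have : b - 1 ∈ Set.Ico m b := by simp [Set.mem_Ico]; omega
    rw [← h] at this
    simp [Set.mem_Ico] at this; omega
  · have hlt : b < a := by omega
    have : a - 1 ∈ Set.Ico m a := by simp [Set.mem_Ico]; omega
    rw [h] at this
    simp [Set.mem_Ico] at this; omega

/-- a downward-closed subset of `[a, b)` is an initial interval -/
lemma dc_eq_Ico (S : Set ℕ) (a b : ℕ) (hsub : S ⊆ Set.Ico a b)
    (hdc : ∀ j ∈ S, ∀ j', a ≤ j' → j' ≤ j → j' ∈ S) :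
    S = Set.Ico a (a + S.ncard) := by
  have hfin : S.Finite := (Set.finite_Ico a b).subset hsub
  rcases S.eq_empty_or_nonempty with rfl | hne
  · simp
  · classical
    have hne' : hfin.toFinset.Nonempty := by
      rwa [← Set.Finite.toFinset_nonempty hfin] at hne
    set Mx := hfin.toFinset.max' hne' with hMx
    have hMxS : Mx ∈ S := by
      have := hfin.toFinset.max'_mem hne'
      rwa [Set.Finite.mem_toFinset] at this
    have hSeq : S = Set.Icc a Mx := by
      ext j
      constructor
      · intro hj
        exact ⟨(hsub hj).1, hfin.toFinset.le_max' j (by rwa [Set.Finite.mem_toFinset])⟩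
      · intro hj
        exact hdc Mx hMxS j hj.1 hj.2
    have haM : a ≤ Mx := (hsub hMxS).1
    have hcard : S.ncard = Mx + 1 - a := by
      rw [hSeq, ← Finset.coe_Icc, Set.ncard_coe_finset, Nat.card_Icc]
    rw [hcard, hSeq]
    ext j; simp [Set.mem_Icc, Set.mem_Ico]; omega

end LRAux
namespace LRAux

open Finset

/-- a bound for a partition -/
lemma LRPartition.exists_bound (a : LRPartition) : ∃ B, ∀ i, B ≤ i → a.parts i = 0 :=
  a.eventually_zero

lemma skewCells_mem {l m : LRPartition} {p : ℕ × ℕ} :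
    p ∈ skewCells l m ↔ m.parts p.1 ≤ p.2 ∧ p.2 < l.parts p.1 := Iff.rfl

lemma skewCells_finite (l m : LRPartition) : (skewCells l m).Finite := by
  obtain ⟨B, hB⟩ := l.eventually_zero
  apply Set.Finite.subset ((Set.finite_Iio B).prod (Set.finite_Iio (l.parts 0)))
  rintro ⟨i, j⟩ ⟨h1, h2⟩
  constructor
  · simp only [Set.mem_Iio]
    by_contra hc
    push_neg at hc
    rw [hB i hc] at h2; omega
  · simp only [Set.mem_Iio]
    exact lt_of_lt_of_le h2 (l.antitone' (Nat.zero_le i))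

/-- cumulative column boundaries -/
def cumul (mp : ℕ → ℕ) (M : ℕ → ℕ → ℕ) (i t : ℕ) : ℕ :=
  mp i + ∑ k ∈ Finset.range t, M i k

lemma cumul_mono (mp : ℕ → ℕ) (M : ℕ → ℕ → ℕ) (i : ℕ) {t t' : ℕ} (h : t ≤ t') :
    cumul mp M i t ≤ cumul mp M i t' :=
  Nat.add_le_add_left (Finset.sum_le_sum_of_subset (Finset.range_subset_range.mpr h)) _

lemma le_cumul (mp : ℕ → ℕ) (M : ℕ → ℕ → ℕ) (i t : ℕ) : mp i ≤ cumul mp M i t :=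
  Nat.le_add_right _ _

lemma cumul_succ_sub (mp : ℕ → ℕ) (M : ℕ → ℕ → ℕ) (i t : ℕ) :
    cumul mp M i (t + 1) = cumul mp M i t + M i t := by
  simp [cumul, Finset.sum_range_succ, Nat.add_assoc]

/-- the linear conditions satisfied by the row-content matrix of an LR tableau -/
structure IsLRCounts (l m nu : LRPartition) (B : ℕ) (M : ℕ → ℕ → ℕ) : Prop where
  rows : ∀ i, B ≤ i → l.parts i = 0
  supp : ∀ i k, B ≤ k → M i k = 0
  rowlen : ∀ i, m.parts i + ∑ k ∈ Finset.range B, M i k = l.parts i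
  colstrict : ∀ i t, cumul m.parts M (i + 1) (t + 1) ≤ cumul m.parts M i t
  content : ∀ k, ∑ i ∈ Finset.range B, M i k = nu.parts k
  lattice : ∀ r k, ∑ i ∈ Finset.range (r + 1), M i (k + 1) ≤ ∑ i ∈ Finset.range r, M i k

namespace IsLRCounts

variable {l m nu : LRPartition} {B : ℕ} {M : ℕ → ℕ → ℕ}

lemma cumul_stable (hc : IsLRCounts l m nu B M) {t : ℕ} (h : B ≤ t) (i : ℕ) : cumul m.parts M i t = l.parts i := by
  rw [cumul, ← hc.rowlen i]
  congr 1
  exact (Finset.sum_subset (Finset.range_subset_range.mpr h)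
    (fun k _ hk => hc.supp i k (by simpa using hk))).symm

lemma cumul_le (hc : IsLRCounts l m nu B M) (i t : ℕ) : cumul m.parts M i t ≤ l.parts i := by
  rcases le_or_gt B t with h | h
  · exact (hc.cumul_stable h i).le
  · exact (cumul_mono _ _ i h.le).trans (hc.cumul_stable le_rfl i).le

lemma sub (hc : IsLRCounts l m nu B M) : LRPartition.Sub m l := fun i => (hc.rowlen i) ▸ Nat.le_add_right _ _

lemma M_eq_zero_of_row (hc : IsLRCounts l m nu B M) {i : ℕ} (h : B ≤ i) (k : ℕ) : M i k = 0 := by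
  rcases le_or_gt B k with hk | hk
  · exact hc.supp i k hk
  · have h0 := hc.rowlen i
    rw [hc.rows i h] at h0
    have : ∑ k' ∈ Finset.range B, M i k' = 0 := by omega
    exact Finset.sum_eq_zero_iff.mp this k (Finset.mem_range.mpr hk)

end IsLRCounts

open scoped Classical in
/-- the tableau built from a row-content matrix -/
noncomputable def Tab (l m : LRPartition) (M : ℕ → ℕ → ℕ) : ℕ × ℕ → ℕ := fun p =>
  if h : (m.parts p.1 ≤ p.2 ∧ p.2 < l.parts p.1) ∧
      ∃ t, p.2 < cumul m.parts M p.1 (t + 1)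
  then Nat.find h.2 + 1 else 0

lemma Tab_zero (l m : LRPartition) (M : ℕ → ℕ → ℕ) {p : ℕ × ℕ} (h : p ∉ skewCells l m) :
    Tab l m M p = 0 := by
  rw [Tab, dif_neg]
  rintro ⟨h1, -⟩
  exact h h1

variable {l m nu : LRPartition} {B : ℕ} {M : ℕ → ℕ → ℕ}

lemma Tab_spec (hc : IsLRCounts l m nu B M) {i j : ℕ} (hcell : (i, j) ∈ skewCells l m) :
    ∃ t, Tab l m M (i, j) = t + 1 ∧ cumul m.parts M i t ≤ j ∧ j < cumul m.parts M i (t + 1) := by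
  classical
  obtain ⟨hmj, hjl⟩ := hcell
  have hex : ∃ t, j < cumul m.parts M i (t + 1) :=
    ⟨B, lt_of_lt_of_le (hjl.trans_le (hc.cumul_stable le_rfl i).ge)
      (cumul_mono _ _ i (Nat.le_succ B))⟩
  refine ⟨Nat.find hex, ?_, ?_, Nat.find_spec hex⟩
  · rw [Tab, dif_pos ⟨⟨hmj, hjl⟩, hex⟩]
  · rcases Nat.eq_zero_or_pos (Nat.find hex) with h0 | h0
    · rw [h0]; exact hmj
    · have := Nat.find_min hex (show Nat.find hex - 1 < Nat.find hex by omega)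
      push_neg at this
      have h1 : Nat.find hex - 1 + 1 = Nat.find hex := by omega
      rwa [h1] at this

lemma Tab_eq (hc : IsLRCounts l m nu B M) {i j t : ℕ} (hcell : (i, j) ∈ skewCells l m)
    (h1 : cumul m.parts M i t ≤ j) (h2 : j < cumul m.parts M i (t + 1)) :
    Tab l m M (i, j) = t + 1 := by
  obtain ⟨s, hs, hs1, hs2⟩ := Tab_spec hc hcell
  rw [hs]
  congr 1
  by_contra hne
  rcases Nat.lt_or_ge s t with hlt | hge
  · have : cumul m.parts M i (s + 1) ≤ cumul m.parts M i t := cumul_mono _ _ i hlt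
    omega
  · have hgt : t < s := by omega
    have : cumul m.parts M i (t + 1) ≤ cumul m.parts M i s := cumul_mono _ _ i hgt
    omega

/-- row fibers of the constructed tableau -/
lemma Tab_row_set (hc : IsLRCounts l m nu B M) (i t : ℕ) :
    {j | (i, j) ∈ skewCells l m ∧ Tab l m M (i, j) = t + 1} =
      Set.Ico (cumul m.parts M i t) (cumul m.parts M i (t + 1)) := by
  ext j
  simp only [Set.mem_setOf_eq, Set.mem_Ico]
  constructor
  · rintro ⟨hcell, htab⟩
    obtain ⟨s, hs, hs1, hs2⟩ := Tab_spec hc hcell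
    have : s = t := by omega
    subst this
    exact ⟨hs1, hs2⟩
  · rintro ⟨h1, h2⟩
    have hcell : (i, j) ∈ skewCells l m :=
      ⟨(le_cumul _ _ i t).trans h1, h2.trans_le (hc.cumul_le i (t + 1))⟩
    exact ⟨hcell, Tab_eq hc hcell h1 h2⟩

lemma Tab_row_ncard (hc : IsLRCounts l m nu B M) (i t : ℕ) :
    {j | (i, j) ∈ skewCells l m ∧ Tab l m M (i, j) = t + 1}.ncard = M i t := by
  rw [Tab_row_set hc, ncard_Ico, cumul_succ_sub]
  omega

end LRAux
namespace LRAux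

open Finset

variable {l m nu : LRPartition} {B : ℕ} {M : ℕ → ℕ → ℕ}

lemma ncard_row_split (S : Set (ℕ × ℕ)) (hS : S.Finite) (R : ℕ) (h : ∀ p ∈ S, p.1 < R) :
    S.ncard = ∑ i ∈ Finset.range R, {j | (i, j) ∈ S}.ncard := by
  rw [ncard_fiber_sum S hS (fun p => p.1) R h]
  exact Finset.sum_congr rfl fun i _ => ncard_fiber_fst S i

lemma cell_row_lt (hc : IsLRCounts l m nu B M) {p : ℕ × ℕ} (hp : p ∈ skewCells l m) :
    p.1 < B := by
  by_contra hb
  push_neg at hb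
  have := hc.rows p.1 hb
  have := hp.2
  omega

lemma Tab_pos (hc : IsLRCounts l m nu B M) {p : ℕ × ℕ} (hp : p ∈ skewCells l m) :
    0 < Tab l m M p := by
  obtain ⟨i, j⟩ := p
  obtain ⟨t, ht, -, -⟩ := Tab_spec hc hp
  omega

lemma Tab_row_weak (hc : IsLRCounts l m nu B M) (i j j' : ℕ)
    (h1 : (i, j) ∈ skewCells l m) (h2 : (i, j') ∈ skewCells l m) (hjj : j ≤ j') :
    Tab l m M (i, j) ≤ Tab l m M (i, j') := by
  obtain ⟨t, ht, ht1, ht2⟩ := Tab_spec hc h1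
  obtain ⟨s, hs, hs1, hs2⟩ := Tab_spec hc h2
  rw [ht, hs]
  by_contra hcon
  have hst : s < t := by omega
  have : cumul m.parts M i (s + 1) ≤ cumul m.parts M i t := cumul_mono _ _ i hst
  omega

lemma Tab_col_strict_adj (hc : IsLRCounts l m nu B M) (i j : ℕ)
    (h1 : (i, j) ∈ skewCells l m) (h2 : (i + 1, j) ∈ skewCells l m) :
    Tab l m M (i, j) < Tab l m M (i + 1, j) := by
  obtain ⟨t, ht, ht1, ht2⟩ := Tab_spec hc h1
  obtain ⟨s, hs, hs1, hs2⟩ := Tab_spec hc h2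
  rw [ht, hs]
  by_contra hcon
  have hst : s ≤ t := by omega
  have k1 : cumul m.parts M (i + 1) (s + 1) ≤ cumul m.parts M i s := hc.colstrict i s
  have k2 : cumul m.parts M i s ≤ cumul m.parts M i t := cumul_mono _ _ i hst
  omega

lemma Tab_col_strict (hc : IsLRCounts l m nu B M) (i i' j : ℕ)
    (h1 : (i, j) ∈ skewCells l m) (h2 : (i', j) ∈ skewCells l m) (hii : i < i') :
    Tab l m M (i, j) < Tab l m M (i', j) := by
  have key : ∀ n, (n, j) ∈ skewCells l m → i < n → Tab l m M (i, j) < Tab l m M (n, j) := by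
    intro n
    induction n with
    | zero => omega
    | succ n ih =>
      intro h2 hii
      rcases Nat.lt_or_ge i n with hlt | hge
      · have hn : (n, j) ∈ skewCells l m :=
          ⟨le_trans (m.antitone' hlt.le) h1.1,
           lt_of_lt_of_le h2.2 (l.antitone' (Nat.le_succ n))⟩
        exact lt_trans (ih hn hlt) (Tab_col_strict_adj hc n j hn h2)
      · have : n = i := by omega
        subst this
        exact Tab_col_strict_adj hc n j h1 h2
  exact key i' h2 hii

lemma Tab_content (hc : IsLRCounts l m nu B M) (k : ℕ) :
    {p ∈ skewCells l m | Tab l m M p = k + 1}.ncard = nu.parts k := by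
  have hfin : {p ∈ skewCells l m | Tab l m M p = k + 1}.Finite :=
    (skewCells_finite l m).subset (fun p hp => hp.1)
  rw [ncard_row_split _ hfin B (fun p hp => cell_row_lt hc hp.1), ← hc.content k]
  refine Finset.sum_congr rfl fun i _ => ?_
  rw [← Tab_row_ncard hc i k]
  rfl

lemma Tab_lattice (hc : IsLRCounts l m nu B M) (r c k : ℕ) (hk : 0 < k) :
    {p ∈ skewCells l m | (p.1 < r ∨ (p.1 = r ∧ c ≤ p.2)) ∧ Tab l m M p = k + 1}.ncard ≤
      {p ∈ skewCells l m | (p.1 < r ∨ (p.1 = r ∧ c ≤ p.2)) ∧ Tab l m M p = k}.ncard := by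
  set R := B + r + 1 with hR
  set A := {p ∈ skewCells l m | (p.1 < r ∨ (p.1 = r ∧ c ≤ p.2)) ∧ Tab l m M p = k + 1} with hA
  set Bs := {p ∈ skewCells l m | (p.1 < r ∨ (p.1 = r ∧ c ≤ p.2)) ∧ Tab l m M p = k} with hBs
  have hAfin : A.Finite := (skewCells_finite l m).subset (fun p hp => hp.1)
  have hBfin : Bs.Finite := (skewCells_finite l m).subset (fun p hp => hp.1)
  have hrowfin : ∀ i t, {j | (i, j) ∈ skewCells l m ∧ Tab l m M (i, j) = t + 1}.Finite := by
    intro i t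
    rw [Tab_row_set hc]
    exact Set.finite_Ico _ _
  have hAcard : A.ncard ≤ ∑ i ∈ Finset.range (r + 1), M i k := by
    rw [ncard_row_split A hAfin R (fun p hp => lt_of_lt_of_le (cell_row_lt hc hp.1) (by omega))]
    calc ∑ i ∈ Finset.range R, {j | (i, j) ∈ A}.ncard
        ≤ ∑ i ∈ Finset.range R, (if i ≤ r then M i k else 0) := by
          refine Finset.sum_le_sum fun i _ => ?_
          by_cases hir : i ≤ r
          · rw [if_pos hir, ← Tab_row_ncard hc i k]
            refine Set.ncard_le_ncard ?_ (hrowfin i k)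
            rintro j ⟨hcell, -, htab⟩
            exact ⟨hcell, htab⟩
          · rw [if_neg hir]
            have : {j | (i, j) ∈ A} = ∅ := by
              ext j
              simp only [hA, Set.mem_setOf_eq, Set.mem_empty_iff_false, iff_false]
              rintro ⟨-, hreg, -⟩
              rcases hreg with h | ⟨h, -⟩ <;> omega
            rw [this, Set.ncard_empty]
      _ = ∑ i ∈ Finset.range (r + 1), M i k := by
          rw [← Finset.sum_subset (Finset.range_subset_range.mpr (show r + 1 ≤ R by omega))
            (fun i _ hi => by
              rw [if_neg]
              simp only [Finset.mem_range] at hi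
              omega)]
          exact Finset.sum_congr rfl fun i hi => by
            rw [if_pos]
            simp only [Finset.mem_range] at hi
            omega
  have hBcard : ∑ i ∈ Finset.range r, M i (k - 1) ≤ Bs.ncard := by
    rw [ncard_row_split Bs hBfin R (fun p hp => lt_of_lt_of_le (cell_row_lt hc hp.1) (by omega))]
    calc ∑ i ∈ Finset.range r, M i (k - 1)
        = ∑ i ∈ Finset.range R, (if i < r then M i (k - 1) else 0) := by
          rw [← Finset.sum_subset (Finset.range_subset_range.mpr (show r ≤ R by omega))
            (fun i _ hi => by
              rw [if_neg]
              simpa using hi)]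
          exact Finset.sum_congr rfl fun i hi => by
            rw [if_pos (Finset.mem_range.mp hi)]
      _ ≤ ∑ i ∈ Finset.range R, {j | (i, j) ∈ Bs}.ncard := by
          refine Finset.sum_le_sum fun i _ => ?_
          by_cases hir : i < r
          · rw [if_pos hir]
            have hset : {j | (i, j) ∈ Bs} = {j | (i, j) ∈ skewCells l m ∧
                Tab l m M (i, j) = (k - 1) + 1} := by
              ext j
              simp only [hBs, Set.mem_setOf_eq]
              constructor
              · rintro ⟨hcell, -, htab⟩
                exact ⟨hcell, by omega⟩
              · rintro ⟨hcell, htab⟩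
                exact ⟨hcell, Or.inl hir, by omega⟩
            rw [hset, Tab_row_ncard hc]
          · rw [if_neg hir]
            exact Nat.zero_le _
  have hlat := hc.lattice r (k - 1)
  have hk1 : (k - 1) + 1 = k := by omega
  rw [hk1] at hlat
  exact le_trans hAcard (le_trans hlat hBcard)

lemma Tab_isLR (hc : IsLRCounts l m nu B M) : IsLRTableau l m nu (Tab l m M) where
  sub := hc.sub
  pos := fun p hp => Tab_pos hc hp
  zero := fun p hp => Tab_zero l m M hp
  row_weak := Tab_row_weak hc
  col_strict := Tab_col_strict hc
  content := Tab_content hc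
  lattice := Tab_lattice hc

end LRAux
namespace LRAux

open Finset

/-- row-content matrix of a filling -/
noncomputable def counts (l m : LRPartition) (T : ℕ × ℕ → ℕ) (i k : ℕ) : ℕ :=
  {j | (i, j) ∈ skewCells l m ∧ T (i, j) = k + 1}.ncard

variable {l m nu : LRPartition} {B : ℕ} {T : ℕ × ℕ → ℕ}

lemma rowfin (l m : LRPartition) (i t : ℕ) (T : ℕ × ℕ → ℕ) :
    {j | (i, j) ∈ skewCells l m ∧ T (i, j) ≤ t}.Finite := by
  apply (Set.finite_Ico (m.parts i) (l.parts i)).subset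
  rintro j ⟨hcell, -⟩
  exact ⟨hcell.1, hcell.2⟩

lemma entry_le (hT : IsLRTableau l m nu T) (hBnu : ∀ k, B ≤ k → nu.parts k = 0)
    {p : ℕ × ℕ} (hp : p ∈ skewCells l m) : T p ≤ B := by
  by_contra hcon
  push_neg at hcon
  have hv : 1 ≤ T p := hT.pos p hp
  have hk : B ≤ T p - 1 := by omega
  have h0 : {q ∈ skewCells l m | T q = (T p - 1) + 1}.ncard = 0 := by
    rw [hT.content (T p - 1), hBnu _ hk]
  have hfin : {q ∈ skewCells l m | T q = (T p - 1) + 1}.Finite :=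
    (skewCells_finite l m).subset fun q hq => hq.1
  have : p ∈ {q ∈ skewCells l m | T q = (T p - 1) + 1} := ⟨hp, by omega⟩
  rw [(Set.ncard_eq_zero hfin).mp h0] at this
  exact this

/-- entries `≤ t` in a row form an initial interval up to the cumulative boundary -/
lemma le_set_eq (hT : IsLRTableau l m nu T) (i t : ℕ) :
    {j | (i, j) ∈ skewCells l m ∧ T (i, j) ≤ t} =
      Set.Ico (m.parts i) (cumul m.parts (counts l m T) i t) := by
  set S := {j | (i, j) ∈ skewCells l m ∧ T (i, j) ≤ t} with hS
  have hsub : S ⊆ Set.Ico (m.parts i) (l.parts i) := fun j hj => ⟨hj.1.1, hj.1.2⟩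
  have hdc : ∀ j ∈ S, ∀ j', m.parts i ≤ j' → j' ≤ j → j' ∈ S := by
    rintro j ⟨hcell, hle⟩ j' hj1 hj2
    have hcell' : (i, j') ∈ skewCells l m := ⟨hj1, lt_of_le_of_lt hj2 hcell.2⟩
    exact ⟨hcell', le_trans (hT.row_weak i j' j hcell' hcell hj2) hle⟩
  have hIco := dc_eq_Ico S (m.parts i) (l.parts i) hsub hdc
  have hcard : S.ncard = ∑ k ∈ Finset.range t, counts l m T i k := by
    rw [ncard_fiber_sum S (rowfin l m i t T) (fun j => T (i, j) - 1) t
      (by rintro j ⟨hcell, hle⟩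
          have := hT.pos (i, j) hcell
          show T (i, j) - 1 < t
          omega)]
    refine Finset.sum_congr rfl fun k hk => ?_
    simp only [Finset.mem_range] at hk
    congr 1
    ext j
    simp only [hS, Set.mem_setOf_eq, counts]
    constructor
    · rintro ⟨⟨hcell, hle⟩, hval⟩
      have := hT.pos (i, j) hcell
      exact ⟨hcell, by omega⟩
    · rintro ⟨hcell, hval⟩
      exact ⟨⟨hcell, by omega⟩, by omega⟩
  rw [hIco, hcard]
  rfl

lemma counts_isLR (hT : IsLRTableau l m nu T)
    (hBl : ∀ i, B ≤ i → l.parts i = 0) (hBnu : ∀ k, B ≤ k → nu.parts k = 0) :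
    IsLRCounts l m nu B (counts l m T) := by
  have hcum : ∀ i t, {j | (i, j) ∈ skewCells l m ∧ T (i, j) ≤ t} =
      Set.Ico (m.parts i) (cumul m.parts (counts l m T) i t) := le_set_eq hT
  have hsupp : ∀ i k, B ≤ k → counts l m T i k = 0 := by
    intro i k hk
    rw [counts, Set.ncard_eq_zero ((rowfin l m i (k + 1) T).subset
      (fun j hj => ⟨hj.1, hj.2.le⟩))]
    ext j
    simp only [Set.mem_setOf_eq, Set.mem_empty_iff_false, iff_false]
    rintro ⟨hcell, hval⟩
    have h0 : {q ∈ skewCells l m | T q = k + 1}.ncard = 0 := by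
      rw [hT.content k, hBnu k hk]
    have hfin : {q ∈ skewCells l m | T q = k + 1}.Finite :=
      (skewCells_finite l m).subset fun q hq => hq.1
    have : (i, j) ∈ {q ∈ skewCells l m | T q = k + 1} := ⟨hcell, hval⟩
    rw [(Set.ncard_eq_zero hfin).mp h0] at this
    exact this
  have hrowlen : ∀ i, m.parts i + ∑ k ∈ Finset.range B, counts l m T i k = l.parts i := by
    intro i
    have h1 : {j | (i, j) ∈ skewCells l m ∧ T (i, j) ≤ B} = Set.Ico (m.parts i) (l.parts i) := by
      ext j
      simp only [Set.mem_setOf_eq, Set.mem_Ico]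
      constructor
      · rintro ⟨hcell, -⟩; exact ⟨hcell.1, hcell.2⟩
      · rintro ⟨h1, h2⟩
        exact ⟨⟨h1, h2⟩, entry_le hT hBnu ⟨h1, h2⟩⟩
    have h2 := hcum i B
    rw [h1] at h2
    exact (Ico_inj (hT.sub i) (le_cumul _ _ i B) h2).symm
  refine ⟨hBl, hsupp, hrowlen, ?_, ?_, ?_⟩
  · -- colstrict
    intro i t
    rcases le_or_gt (cumul m.parts (counts l m T) (i + 1) (t + 1)) (m.parts i) with hle | hlt
    · exact hle.trans (le_cumul _ _ i t)
    · have hj : cumul m.parts (counts l m T) (i + 1) (t + 1) - 1 ∈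
          Set.Ico (m.parts (i + 1)) (cumul m.parts (counts l m T) (i + 1) (t + 1)) := by
        have h2 : m.parts (i + 1) ≤ m.parts i := m.antitone' (Nat.le_succ i)
        constructor <;> omega
      rw [← hcum (i + 1) (t + 1)] at hj
      obtain ⟨hcell1, hle1⟩ := hj
      have hcell0 : (i, cumul m.parts (counts l m T) (i + 1) (t + 1) - 1) ∈ skewCells l m := by
        refine ⟨?_, ?_⟩
        · show m.parts i ≤ _
          omega
        · show _ < l.parts i
          exact lt_of_lt_of_le hcell1.2 (l.antitone' (Nat.le_succ i))
      have hstrict := hT.col_strict i (i + 1) _ hcell0 hcell1 (Nat.lt_succ_self i)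
      have hj0 : cumul m.parts (counts l m T) (i + 1) (t + 1) - 1 ∈
          {j | (i, j) ∈ skewCells l m ∧ T (i, j) ≤ t} := ⟨hcell0, by omega⟩
      rw [hcum i t] at hj0
      have h3 : cumul m.parts (counts l m T) (i + 1) (t + 1) - 1 <
          cumul m.parts (counts l m T) i t := hj0.2
      omega
  · -- content
    intro k
    have hfin : {p ∈ skewCells l m | T p = k + 1}.Finite :=
      (skewCells_finite l m).subset fun q hq => hq.1
    rw [← hT.content k, ncard_row_split _ hfin B
      (fun p hp => by
        by_contra hb
        push_neg at hb
        have := hBl p.1 hb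
        have := hp.1.2
        omega)]
    rfl
  · -- lattice
    intro r k
    have hc1 : ∀ j, (r, j) ∈ skewCells l m → T (r, j) ≤ k + 1 →
        j < cumul m.parts (counts l m T) r (k + 1) := by
      intro j hcell hle
      have hj : j ∈ {j | (r, j) ∈ skewCells l m ∧ T (r, j) ≤ k + 1} := ⟨hcell, hle⟩
      rw [hcum r (k + 1)] at hj
      exact hj.2
    have hc0 : ∀ j, (r, j) ∈ skewCells l m → j < cumul m.parts (counts l m T) r (k + 1) →
        T (r, j) ≤ k + 1 := by
      intro j hcell hlt
      have hj : j ∈ Set.Ico (m.parts r) (cumul m.parts (counts l m T) r (k + 1)) :=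
        ⟨hcell.1, hlt⟩
      rw [← hcum r (k + 1)] at hj
      exact hj.2
    set c := cumul m.parts (counts l m T) r (k + 1) with hcdef
    have hlat := hT.lattice r c (k + 1) (by omega)
    set R := B + r + 1 with hR
    have hrowB : ∀ p : ℕ × ℕ, p ∈ skewCells l m → p.1 < R := by
      intro p hp
      by_contra hb
      push_neg at hb
      have := hBl p.1 (by omega)
      have := hp.2
      omega
    have hAfin : {p ∈ skewCells l m | (p.1 < r ∨ (p.1 = r ∧ c ≤ p.2)) ∧ T p = (k+1) + 1}.Finite :=
      (skewCells_finite l m).subset fun q hq => hq.1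
    have hBfin : {p ∈ skewCells l m | (p.1 < r ∨ (p.1 = r ∧ c ≤ p.2)) ∧ T p = (k+1)}.Finite :=
      (skewCells_finite l m).subset fun q hq => hq.1
    have hAcard : {p ∈ skewCells l m | (p.1 < r ∨ (p.1 = r ∧ c ≤ p.2)) ∧ T p = (k+1) + 1}.ncard
        = ∑ i ∈ Finset.range (r + 1), counts l m T i (k + 1) := by
      rw [ncard_row_split _ hAfin R (fun p hp => hrowB p hp.1)]
      rw [← Finset.sum_subset (Finset.range_subset_range.mpr (show r + 1 ≤ R by omega))
        (fun i _ hi => by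
          simp only [Finset.mem_range, not_lt] at hi
          rw [Set.ncard_eq_zero ((rowfin l m i (k + 2) T).subset
            (fun j hj => ⟨hj.1, le_of_eq hj.2.2⟩))]
          ext j
          simp only [Set.mem_setOf_eq, Set.mem_empty_iff_false, iff_false]
          rintro ⟨-, hreg, -⟩
          rcases hreg with h | ⟨h, -⟩ <;> omega)]
      refine Finset.sum_congr rfl fun i hi => ?_
      simp only [Finset.mem_range] at hi
      rw [counts]
      congr 1
      ext j
      simp only [Set.mem_setOf_eq]
      rcases Nat.lt_or_ge i r with hir | hir
      · constructor
        · rintro ⟨hcell, -, hval⟩; exact ⟨hcell, hval⟩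
        · rintro ⟨hcell, hval⟩; exact ⟨hcell, Or.inl hir, hval⟩
      · have hieq : i = r := by omega
        subst hieq
        constructor
        · rintro ⟨hcell, -, hval⟩; exact ⟨hcell, hval⟩
        · rintro ⟨hcell, hval⟩
          refine ⟨hcell, Or.inr ⟨rfl, ?_⟩, hval⟩
          by_contra hc2
          push_neg at hc2
          have := hc0 j hcell hc2
          omega
    have hBcard : {p ∈ skewCells l m | (p.1 < r ∨ (p.1 = r ∧ c ≤ p.2)) ∧ T p = (k+1)}.ncard
        = ∑ i ∈ Finset.range r, counts l m T i k := by
      rw [ncard_row_split _ hBfin R (fun p hp => hrowB p hp.1)]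
      rw [← Finset.sum_subset (Finset.range_subset_range.mpr (show r ≤ R by omega))
        (fun i _ hi => by
          simp only [Finset.mem_range, not_lt] at hi
          rw [Set.ncard_eq_zero ((rowfin l m i (k + 1) T).subset
            (fun j hj => ⟨hj.1, le_of_eq hj.2.2⟩))]
          ext j
          simp only [Set.mem_setOf_eq, Set.mem_empty_iff_false, iff_false]
          rintro ⟨hcell, hreg, hval⟩
          rcases hreg with h | ⟨h, hcj⟩
          · omega
          · subst h
            have := hc1 j hcell (by omega)
            omega)]
      refine Finset.sum_congr rfl fun i hi => ?_
      simp only [Finset.mem_range] at hi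
      rw [counts]
      congr 1
      ext j
      simp only [Set.mem_setOf_eq]
      constructor
      · rintro ⟨hcell, -, hval⟩; exact ⟨hcell, hval⟩
      · rintro ⟨hcell, hval⟩; exact ⟨hcell, Or.inl hi, hval⟩
    rw [hAcard, hBcard] at hlat
    exact hlat

lemma Tab_counts_eq (hT : IsLRTableau l m nu T)
    (hBl : ∀ i, B ≤ i → l.parts i = 0) (hBnu : ∀ k, B ≤ k → nu.parts k = 0) :
    Tab l m (counts l m T) = T := by
  have hc := counts_isLR hT hBl hBnu
  funext p
  obtain ⟨i, j⟩ := p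
  by_cases hp : (i, j) ∈ skewCells l m
  · have hv := hT.pos (i, j) hp
    set t := T (i, j) - 1 with ht
    have hle1 : j ∈ Set.Ico (m.parts i) (cumul m.parts (counts l m T) i (t + 1)) := by
      rw [← le_set_eq hT i (t + 1)]
      exact ⟨hp, by omega⟩
    have hnot : j ∉ Set.Ico (m.parts i) (cumul m.parts (counts l m T) i t) := by
      rw [← le_set_eq hT i t]
      rintro ⟨-, habs⟩
      omega
    simp only [Set.mem_Ico, not_and, not_lt] at hle1 hnot
    rw [Tab_eq hc hp (hnot hp.1) hle1.2]
    omega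
  · rw [Tab_zero l m _ hp, hT.zero _ hp]

lemma counts_Tab (hc : IsLRCounts l m nu B (M := M)) :
    counts l m (Tab l m M) = M := by
  funext i k
  rw [counts, Tab_row_ncard hc]

end LRAux
namespace LRAux

open Finset

lemma cumul_add (m1 m2 : LRPartition) (M1 M2 : ℕ → ℕ → ℕ) (i t : ℕ) :
    cumul (m1 + m2).parts (fun i k => M1 i k + M2 i k) i t =
      cumul m1.parts M1 i t + cumul m2.parts M2 i t := by
  simp only [cumul, LRPartition.add_parts, Finset.sum_add_distrib]
  omega

lemma IsLRCounts.add {l1 m1 nu1 l2 m2 nu2 : LRPartition} {B : ℕ} {M1 M2 : ℕ → ℕ → ℕ}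
    (h1 : IsLRCounts l1 m1 nu1 B M1) (h2 : IsLRCounts l2 m2 nu2 B M2) :
    IsLRCounts (l1 + l2) (m1 + m2) (nu1 + nu2) B (fun i k => M1 i k + M2 i k) where
  rows i hi := by rw [LRPartition.add_parts, h1.rows i hi, h2.rows i hi]
  supp i k hk := by rw [h1.supp i k hk, h2.supp i k hk]
  rowlen i := by
    have := h1.rowlen i
    have := h2.rowlen i
    simp only [LRPartition.add_parts, Finset.sum_add_distrib]
    omega
  colstrict i t := by
    rw [cumul_add, cumul_add]
    exact Nat.add_le_add (h1.colstrict i t) (h2.colstrict i t)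
  content k := by
    have := h1.content k
    have := h2.content k
    simp only [LRPartition.add_parts, Finset.sum_add_distrib]
    omega
  lattice r k := by
    simp only [Finset.sum_add_distrib]
    exact Nat.add_le_add (h1.lattice r k) (h2.lattice r k)

lemma lrSet_finite (l m nu : LRPartition) : {T : ℕ × ℕ → ℕ | IsLRTableau l m nu T}.Finite := by
  classical
  obtain ⟨B, hB⟩ := nu.eventually_zero
  have hC : (skewCells l m).Finite := skewCells_finite l m
  have : Finite ↥(skewCells l m) := hC.to_subtype
  set ρ : (ℕ × ℕ → ℕ) → (↥(skewCells l m) → ℕ) := fun T q => T q with hρ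
  have hinj : Set.InjOn ρ {T | IsLRTableau l m nu T} := by
    intro T hT U hU hTU
    funext p
    by_cases hp : p ∈ skewCells l m
    · exact congrFun hTU ⟨p, hp⟩
    · rw [hT.zero p hp, hU.zero p hp]
  have himg : ρ '' {T | IsLRTableau l m nu T} ⊆
      Set.pi Set.univ (fun _ : ↥(skewCells l m) => Set.Iic B) := by
    rintro f ⟨T, hT, rfl⟩
    intro q _
    exact entry_le hT hB q.2
  exact Set.Finite.of_finite_image
    ((Set.Finite.pi fun _ => Set.finite_Iic B).subset himg) hinj

lemma main_aux (l m nu l' m' nu' : LRPartition) (T' : ℕ × ℕ → ℕ)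
    (hT' : IsLRTableau l' m' nu' T') :
    LRcoeff l m nu ≤ LRcoeff (l + l') (m + m') (nu + nu') := by
  classical
  obtain ⟨B1, hB1⟩ := l.eventually_zero
  obtain ⟨B2, hB2⟩ := nu.eventually_zero
  obtain ⟨B3, hB3⟩ := l'.eventually_zero
  obtain ⟨B4, hB4⟩ := nu'.eventually_zero
  set B := B1 + B2 + B3 + B4 with hBdef
  have hBl : ∀ i, B ≤ i → l.parts i = 0 := fun i hi => hB1 i (by omega)
  have hBnu : ∀ k, B ≤ k → nu.parts k = 0 := fun k hk => hB2 k (by omega)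
  have hBl' : ∀ i, B ≤ i → l'.parts i = 0 := fun i hi => hB3 i (by omega)
  have hBnu' : ∀ k, B ≤ k → nu'.parts k = 0 := fun k hk => hB4 k (by omega)
  have hcT' : IsLRCounts l' m' nu' B (counts l' m' T') := counts_isLR hT' hBl' hBnu'
  set F : (ℕ × ℕ → ℕ) → (ℕ × ℕ → ℕ) := fun T =>
    Tab (l + l') (m + m') (fun i k => counts l m T i k + counts l' m' T' i k) with hF
  show Set.ncard {T : ℕ × ℕ → ℕ | IsLRTableau l m nu T} ≤
    Set.ncard {T : ℕ × ℕ → ℕ | IsLRTableau (l + l') (m + m') (nu + nu') T}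
  refine Set.ncard_le_ncard_of_injOn F ?_ ?_ (lrSet_finite _ _ _)
  · intro T hT
    exact Tab_isLR ((counts_isLR hT hBl hBnu).add hcT')
  · intro T hT U hU hFTU
    have hcT : IsLRCounts l m nu B (counts l m T) := counts_isLR hT hBl hBnu
    have hcU : IsLRCounts l m nu B (counts l m U) := counts_isLR hU hBl hBnu
    have hT1 := counts_Tab (hcT.add hcT')
    have hU1 := counts_Tab (hcU.add hcT')
    rw [show Tab (l + l') (m + m') (fun i k => counts l m T i k + counts l' m' T' i k)
        = Tab (l + l') (m + m') (fun i k => counts l m U i k + counts l' m' T' i k)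
      from hFTU] at hT1
    rw [hU1] at hT1
    have hcounts : counts l m T = counts l m U := by
      funext i k
      have := congrFun (congrFun hT1 i) k
      omega
    calc T = Tab l m (counts l m T) := (Tab_counts_eq hT hBl hBnu).symm
      _ = Tab l m (counts l m U) := by rw [hcounts]
      _ = U := Tab_counts_eq hU hBl hBnu

end LRAux
/-- If `c(λ';μ',ν') ≠ 0`, then for every `n ≥ 0`,
`c(nλ+λ'; nμ+μ', nν+ν') ≥ c(nλ; nμ, nν)`. -/
theorem lr_stretch_add_ge (l m nu l' m' nu' : LRPartition)
    (h : LRcoeff l' m' nu' ≠ 0) (n : ℕ) :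
    LRcoeff (n • l) (n • m) (n • nu) ≤
      LRcoeff (n • l + l') (n • m + m') (n • nu + nu') := by
  obtain ⟨T', hT'⟩ := Set.nonempty_of_ncard_ne_zero h
  exact LRAux.main_aux (n • l) (n • m) (n • nu) l' m' nu' T' hT'
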